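/- Every nonempty Π⁰₁ class contains a member of computably enumerable degree: if P is a nonempty Π⁰₁ class of infinite binary sequences, then there exist A ∈ P and a computably enumerable set W ⊆ ℕ with A ≤_T W and W ≤_T A. In particular, the leftmost infinite path of any downward-closed computable set of binary strings with at least one infinite path is of computably enumerable degree. -/

import Mathlib

/-- Partial functions recursive in an oracle `O : ℕ → ℕ` (oracle partial recursion). -/
inductive RecursiveInNat (O : ℕ → ℕ) : (ℕ →. ℕ) → Prop
  | zero : RecursiveInNat O (pure 0)
  | succ : RecursiveInNat O Nat.succ
  | left : RecursiveInNat O ↑fun n : ℕ => n.unpair.1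
  | right : RecursiveInNat O ↑fun n : ℕ => n.unpair.2
  | oracle : RecursiveInNat O ↑O
  | pair {f g} : RecursiveInNat O f → RecursiveInNat O g →
      RecursiveInNat O fun n => Nat.pair <$> f n <*> g n
  | comp {f g} : RecursiveInNat O f → RecursiveInNat O g →
      RecursiveInNat O fun n => g n >>= f
  | prec {f g} : RecursiveInNat O f → RecursiveInNat O g →
      RecursiveInNat O (Nat.unpaired fun a n =>
        n.rec (f a) fun y IH => do let i ← IH; g (Nat.pair a (Nat.pair y i)))
  | rfind {f} : RecursiveInNat O f →
      RecursiveInNat O fun a => Nat.rfind fun n => (fun m => m = 0) <$> f (Nat.pair a n)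

/-- The oracle (characteristic function on `ℕ`) associated to a point of Cantor space. -/
def boolOracle (A : ℕ → Bool) : ℕ → ℕ := fun n => (A n).toNat

/-- Turing reducibility `A ≤ᵀ B` for points of Cantor space. -/
def TuringLE (A B : ℕ → Bool) : Prop :=
  RecursiveInNat (boolOracle B) fun n => Part.some ((A n).toNat)

/-- Strict Turing reducibility `A <ᵀ B`. -/
def TuringLT (A B : ℕ → Bool) : Prop :=
  TuringLE A B ∧ ¬ TuringLE B A

/-- `A` is computable iff it is reducible to the empty oracle. -/
def ComputableSet (A : ℕ → Bool) : Prop :=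
  TuringLE A fun _ => false

/-- `P` is a `Π⁰₁` class: the set of infinite paths through a computable,
downward-closed set of finite binary strings. -/
def IsPi01Class (P : Set (ℕ → Bool)) : Prop :=
  ∃ T : List Bool → Bool, Computable T ∧
    (∀ σ τ : List Bool, σ <+: τ → T τ = true → T σ = true) ∧
    ∀ A : ℕ → Bool, A ∈ P ↔ ∀ n : ℕ, T ((List.range n).map A) = true
/-- `W ⊆ ℕ` is computably enumerable: it is the domain of a partial computable function. -/
def CEset (W : Set ℕ) : Prop :=
  ∃ f : ℕ →. ℕ, Partrec f ∧ ∀ n, n ∈ W ↔ (f n).Dom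

open Classical in
/-- The oracle (characteristic function) associated to a set of naturals. -/
noncomputable def setOracle (W : Set ℕ) : ℕ → ℕ := fun n => if n ∈ W then 1 else 0

/-- `A` is of computably enumerable degree. -/
def OfCEDegree (A : ℕ → Bool) : Prop :=
  ∃ W : Set ℕ, CEset W ∧
    RecursiveInNat (setOracle W) (fun n => Part.some ((A n).toNat)) ∧
    RecursiveInNat (boolOracle A) (fun n => Part.some (setOracle W n))

/-- Lexicographic order on Cantor space, with `false < true`. -/
def LexLE (A B : ℕ → Bool) : Prop :=
  A = B ∨ ∃ n : ℕ, (∀ m < n, A m = B m) ∧ A n = false ∧ B n = true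


namespace Pi01Aux

/-- value of a bool string, most significant bit first -/
def val (l : List Bool) : ℕ := l.foldl (fun n b => 2 * n + b.toNat) 0

@[simp] lemma val_nil : val [] = 0 := rfl

lemma val_concat (l : List Bool) (b : Bool) : val (l ++ [b]) = 2 * val l + b.toNat := by
  simp [val, List.foldl_append]

lemma val_lt (l : List Bool) : val l < 2 ^ l.length := by
  induction l using List.reverseRecOn with
  | nil => simp [val]
  | append_singleton l b ih =>
    rw [val_concat]
    have hb : b.toNat ≤ 1 := Bool.toNat_le b
    simp only [List.length_append, List.length_singleton, pow_succ]
    omega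

def toBits (n u : ℕ) : List Bool :=
  (List.range n).map fun i => decide (u / 2 ^ (n - 1 - i) % 2 = 1)

@[simp] lemma length_toBits (n u : ℕ) : (toBits n u).length = n := by simp [toBits]

@[simp] lemma toBits_zero (u : ℕ) : toBits 0 u = [] := by simp [toBits]

lemma toBits_succ (n u : ℕ) : toBits (n + 1) u = toBits n (u / 2) ++ [decide (u % 2 = 1)] := by
  unfold toBits
  rw [List.range_succ, List.map_append]
  congr 1
  · apply List.map_congr_left
    intro i hi
    rw [List.mem_range] at hi
    have h1 : n + 1 - 1 - i = (n - 1 - i) + 1 := by omega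
    rw [h1, pow_succ, Nat.div_div_eq_div_mul, mul_comm]
  · simp

lemma val_toBits : ∀ n u, u < 2 ^ n → val (toBits n u) = u := by
  intro n
  induction n with
  | zero => intro u hu; interval_cases u; simp
  | succ n ih =>
    intro u hu
    rw [toBits_succ, val_concat, ih (u / 2) (by rw [pow_succ] at hu; omega)]
    rcases Nat.mod_two_eq_zero_or_one u with h | h <;> simp [h] <;> omega

lemma toBits_val : ∀ l : List Bool, toBits l.length (val l) = l := by
  intro l
  induction l using List.reverseRecOn with
  | nil => simp
  | append_singleton l b ih =>
    rw [List.length_append, List.length_singleton, toBits_succ, val_concat]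
    have hb : b.toNat ≤ 1 := Bool.toNat_le b
    have h1 : (2 * val l + b.toNat) / 2 = val l := by omega
    have h2 : (2 * val l + b.toNat) % 2 = b.toNat := by omega
    rw [h1, h2, ih]
    cases b <;> simp

lemma val_inj {l₁ l₂ : List Bool} (h : l₁.length = l₂.length) (hv : val l₁ = val l₂) :
    l₁ = l₂ := by
  rw [← toBits_val l₁, ← toBits_val l₂, h, hv]


section TreePart
variable {T : List Bool → Bool}

/-- `σ` has extensions in `T` of every length. -/
def alive (T : List Bool → Bool) (σ : List Bool) : Prop :=
  ∀ N, ∃ ρ, T ρ = true ∧ ρ.length = σ.length + N ∧ σ <+: ρ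

variable (hdc : ∀ σ τ : List Bool, σ <+: τ → T τ = true → T σ = true)
include hdc

lemma alive_T {σ} (h : alive T σ) : T σ = true := by
  obtain ⟨ρ, hρT, hlen, hpre⟩ := h 0
  rwa [hpre.sublist.eq_of_length (by omega)]

lemma alive_mono {σ ρ : List Bool} (hpre : σ <+: ρ) (h : alive T ρ) : alive T σ := by
  intro N
  have hl := hpre.length_le
  obtain ⟨χ, hT, hlen, hp⟩ := h N
  refine ⟨χ.take (σ.length + N), hdc _ _ (List.take_prefix _ _) hT, ?_,
    List.prefix_take_iff.mpr ⟨hpre.trans hp, by omega⟩⟩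
  rw [List.length_take]; omega

lemma alive_child {σ : List Bool} (h : alive T σ) :
    alive T (σ ++ [false]) ∨ alive T (σ ++ [true]) := by
  by_contra hc
  push_neg at hc
  obtain ⟨h0, h1⟩ := hc
  simp only [alive, not_forall, not_exists, not_and] at h0 h1
  obtain ⟨N0, hN0⟩ := h0
  obtain ⟨N1, hN1⟩ := h1
  obtain ⟨ρ, hT, hlen, hpre⟩ := h (1 + (N0 + N1))
  obtain ⟨rest, rfl⟩ := hpre
  have hr : rest ≠ [] := by
    intro e; rw [e] at hlen; simp at hlen
  obtain ⟨b, rest', rfl⟩ := List.exists_cons_of_ne_nil hr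
  have hlen' : (σ ++ b :: rest').length = σ.length + (1 + (N0 + N1)) := hlen
  simp only [List.length_append, List.length_cons] at hlen'
  have hrl : (b :: rest').length = 1 + (N0 + N1) := by simp; omega
  have hkey : ∀ Nb ≤ (N0 + N1), ∃ ρ', T ρ' = true ∧ ρ'.length = (σ ++ [b]).length + Nb ∧
      (σ ++ [b]) <+: ρ' := by
    intro Nb hNb
    have hpb : (σ ++ [b]) <+: (σ ++ b :: rest') := by
      refine ⟨rest', by simp⟩
    refine ⟨(σ ++ b :: rest').take (σ.length + 1 + Nb), hdc _ _ (List.take_prefix _ _) hT, ?_, ?_⟩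
    · rw [List.length_take]
      simp only [List.length_append, List.length_singleton, List.length_cons, List.length_nil] at hlen' hrl ⊢
      omega
    · refine List.prefix_take_iff.mpr ⟨hpb, ?_⟩
      simp only [List.length_append, List.length_singleton]; omega
  cases b
  · obtain ⟨ρ', h1', h2', h3'⟩ := hkey N0 (Nat.le_add_right _ _)
    exact hN0 ρ' h1' h2' h3'
  · obtain ⟨ρ', h1', h2', h3'⟩ := hkey N1 (Nat.le_add_left _ _)
    exact hN1 ρ' h1' h2' h3'

end TreePart

open Classical in
/-- prefixes of the leftmost path -/
noncomputable def pfx (T : List Bool → Bool) : ℕ → List Bool :=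
  fun n => Nat.rec [] (fun _ ih => ih ++ [if alive T (ih ++ [false]) then false else true]) n

open Classical in
/-- the leftmost path -/
noncomputable def lmA (T : List Bool → Bool) (n : ℕ) : Bool :=
  if alive T (pfx T n ++ [false]) then false else true

section Pfx
variable {T : List Bool → Bool}

@[simp] lemma pfx_zero : pfx T 0 = [] := rfl

lemma pfx_succ (n : ℕ) : pfx T (n + 1) = pfx T n ++ [lmA T n] := rfl

@[simp] lemma pfx_length (n : ℕ) : (pfx T n).length = n := by
  induction n with
  | zero => rfl
  | succ n ih => rw [pfx_succ]; simp [ih]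

lemma map_range_lmA (n : ℕ) : (List.range n).map (lmA T) = pfx T n := by
  induction n with
  | zero => rfl
  | succ n ih => rw [List.range_succ, List.map_append, ih, pfx_succ]; rfl

variable (hdc : ∀ σ τ : List Bool, σ <+: τ → T τ = true → T σ = true)
  (hroot : alive T [])
include hdc hroot

lemma alive_pfx : ∀ n, alive T (pfx T n) := by
  intro n
  induction n with
  | zero => exact hroot
  | succ n ih =>
    rw [pfx_succ]
    unfold lmA
    by_cases h : alive T (pfx T n ++ [false])
    · rwa [if_pos h]
    · rw [if_neg h]
      rcases alive_child hdc ih with h' | h'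
      · exact absurd h' h
      · exact h'

lemma pfx_leftmost : ∀ n (τ : List Bool), τ.length = n → alive T τ → val (pfx T n) ≤ val τ := by
  intro n
  induction n with
  | zero => intro τ _ _; simp [val]
  | succ n ih =>
    intro τ hlen hal
    have hτne : τ ≠ [] := by intro e; rw [e] at hlen; simp at hlen
    obtain ⟨l, b, rfl⟩ : ∃ l b, τ = l ++ [b] :=
      ⟨τ.dropLast, τ.getLast hτne, (List.dropLast_append_getLast hτne).symm⟩
    have hl : l.length = n := by simp at hlen; omega
    have hall : alive T l := alive_mono hdc (List.prefix_append _ _) hal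
    have hle := ih l hl hall
    rw [pfx_succ, val_concat, val_concat]
    rcases lt_or_eq_of_le hle with h | h
    · have h1 : (lmA T n).toNat ≤ 1 := Bool.toNat_le _
      omega
    · have hpl : pfx T n = l := val_inj (by rw [pfx_length, hl]) h
      cases b
      · have ha : alive T (pfx T n ++ [false]) := by rw [hpl]; exact hal
        have hA : lmA T n = false := by unfold lmA; rw [if_pos ha]
        rw [hA, h]
      · have h1 : (lmA T n).toNat ≤ 1 := Bool.toNat_le _
        simp only [Bool.toNat_true]
        omega

lemma dead_of_lt {τ : List Bool} {n : ℕ} (hlen : τ.length = n)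
    (hv : val τ < val (pfx T n)) : ¬ alive T τ := fun h =>
  absurd (pfx_leftmost hdc hroot n τ hlen h) (by omega)

end Pfx

/-- bounded boolean `∀` -/
def bAll (q : ℕ → Bool) (K : ℕ) : Bool :=
  Nat.rec true (fun y ih => ih && q y) K

lemma bAll_iff {q : ℕ → Bool} : ∀ {K}, bAll q K = true ↔ ∀ y < K, q y = true := by
  intro K
  induction K with
  | zero => simp [bAll]
  | succ K ih =>
    show (bAll q K && q K) = true ↔ _
    rw [Bool.and_eq_true, ih]
    constructor
    · rintro ⟨h1, h2⟩ y hy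
      rcases Nat.lt_succ_iff_lt_or_eq.mp hy with h | rfl
      · exact h1 y h
      · exact h2
    · intro h
      exact ⟨fun y hy => h y (Nat.lt_succ_of_lt hy), h K (Nat.lt_succ_self K)⟩

/-- `τ` has no extension of length `τ.length + N` in `T`. -/
def noExt (T : List Bool → Bool) (τ : List Bool) (N : ℕ) : Bool :=
  bAll (fun w => ! T (τ ++ toBits N w)) (2 ^ N)

/-- the c.e. witness predicate -/
def EE (T : List Bool → Bool) (m N : ℕ) : Bool :=
  bAll (fun u => noExt T (toBits m.unpair.1 u) N) (m.unpair.2 + 1)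

/-- the c.e. set: codes `⟨n,v⟩` of strings of length `n` and value `v` strictly to the
left of the leftmost path. -/
def Wset (T : List Bool → Bool) : Set ℕ :=
  {m | m.unpair.2 < val (pfx T m.unpair.1)}

section WsetSec
variable {T : List Bool → Bool}

lemma noExt_iff {τ : List Bool} {N : ℕ} :
    noExt T τ N = true ↔ ∀ ρ : List Bool, ρ.length = τ.length + N → τ <+: ρ → T ρ = false := by
  rw [noExt, bAll_iff]
  constructor
  · intro h ρ hlen hpre
    obtain ⟨s, rfl⟩ := hpre
    have hs : s.length = N := by simp at hlen; omega
    have := h (val s) (by rw [← hs]; exact val_lt s)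
    rw [← hs, toBits_val] at this
    simpa using this
  · intro h w _
    have := h (τ ++ toBits N w) (by simp) (List.prefix_append _ _)
    simp [this]

variable (hdc : ∀ σ τ : List Bool, σ <+: τ → T τ = true → T σ = true)
include hdc

lemma noExt_mono {τ : List Bool} {N M : ℕ} (hNM : N ≤ M) (h : noExt T τ N = true) :
    noExt T τ M = true := by
  rw [noExt_iff] at h ⊢
  intro ρ hlen hpre
  by_contra hc
  have hc' : T ρ = true := by simpa using hc
  have h1 : T (ρ.take (τ.length + N)) = true := hdc _ _ (List.take_prefix _ _) hc'
  have h2 := h (ρ.take (τ.length + N)) (by rw [List.length_take]; omega)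
    (List.prefix_take_iff.mpr ⟨hpre, by omega⟩)
  rw [h2] at h1
  exact Bool.false_ne_true h1

omit hdc in
lemma not_alive_iff {τ : List Bool} : ¬ alive T τ ↔ ∃ N, noExt T τ N = true := by
  constructor
  · intro h
    rw [alive, not_forall] at h
    obtain ⟨N, hN⟩ := h
    rw [not_exists] at hN
    refine ⟨N, noExt_iff.mpr fun ρ hlen hpre => ?_⟩
    have := hN ρ
    rw [not_and, not_and] at this
    cases hT : T ρ
    · rfl
    · exact absurd hpre (this hT hlen)
  · rintro ⟨N, hN⟩ hal
    obtain ⟨ρ, h1, h2, h3⟩ := hal N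
    rw [noExt_iff] at hN
    rw [hN ρ h2 h3] at h1
    exact Bool.false_ne_true h1

lemma uniform {n v : ℕ}
    (h : ∀ u ≤ v, ∃ N, noExt T (toBits n u) N = true) :
    ∃ N, ∀ u ≤ v, noExt T (toBits n u) N = true := by
  induction v with
  | zero =>
    obtain ⟨N, hN⟩ := h 0 le_rfl
    exact ⟨N, fun u hu => by rw [Nat.le_zero.mp hu]; exact hN⟩
  | succ v ih =>
    obtain ⟨N1, h1⟩ := ih fun u hu => h u (le_trans hu (Nat.le_succ v))
    obtain ⟨N2, h2⟩ := h (v + 1) le_rfl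
    refine ⟨N1 + N2, fun u hu => ?_⟩
    rcases Nat.lt_succ_iff_lt_or_eq.mp (Nat.lt_succ_of_le hu) with h' | rfl
    · exact noExt_mono hdc (Nat.le_add_right _ _) (h1 u (Nat.lt_succ_iff.mp h'))
    · exact noExt_mono hdc (Nat.le_add_left _ _) h2

variable (hroot : alive T [])
include hroot

lemma mem_W_iff {m : ℕ} : m ∈ Wset T ↔ ∃ N, EE T m N = true := by
  set n := m.unpair.1 with hn
  set v := m.unpair.2 with hv
  have hvp : val (pfx T n) < 2 ^ n := by
    have := val_lt (pfx T n); rwa [pfx_length] at this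
  constructor
  · intro h
    have h' : v < val (pfx T n) := h
    have hdead : ∀ u ≤ v, ∃ N, noExt T (toBits n u) N = true := by
      intro u hu
      refine not_alive_iff.mp (dead_of_lt hdc hroot (length_toBits n u) ?_)
      rw [val_toBits n u (by omega)]
      omega
    obtain ⟨N, hN⟩ := uniform hdc hdead
    exact ⟨N, bAll_iff.mpr fun u hu => hN u (Nat.lt_succ_iff.mp hu)⟩
  · rintro ⟨N, hE⟩
    rw [EE, bAll_iff] at hE
    show v < val (pfx T n)
    by_contra hlt
    push_neg at hlt
    have hu := hE (val (pfx T n)) (Nat.lt_succ_of_le hlt)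
    have htb : toBits n (val (pfx T n)) = pfx T n := by
      have := toBits_val (pfx T n)
      rwa [pfx_length] at this
    rw [htb] at hu
    exact not_alive_iff.mpr ⟨N, hu⟩ (alive_pfx hdc hroot n)

end WsetSec

section Computability

lemma primrec_pow : Primrec₂ (fun a b : ℕ => a ^ b) :=
  Primrec₂.unpaired'.1 Nat.Primrec.pow

lemma primrec_toBits : Primrec₂ toBits := by
  have hsub : Primrec fun x : (ℕ × ℕ) × ℕ => x.1.1 - 1 - x.2 :=
    Primrec.nat_sub.comp
      (Primrec.nat_sub.comp (Primrec.fst.comp Primrec.fst) (Primrec.const 1)) Primrec.snd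
  have hval : Primrec fun x : (ℕ × ℕ) × ℕ => x.1.2 / 2 ^ (x.1.1 - 1 - x.2) % 2 :=
    Primrec.nat_mod.comp
      (Primrec.nat_div.comp (Primrec.snd.comp Primrec.fst)
        (primrec_pow.comp (Primrec.const 2) hsub))
      (Primrec.const 2)
  have hg : Primrec₂ fun (p : ℕ × ℕ) (i : ℕ) => decide (p.2 / 2 ^ (p.1 - 1 - i) % 2 = 1) :=
    (Primrec.eq.comp hval (Primrec.const 1)).decide.to₂
  have := Primrec.list_map (Primrec.list_range.comp Primrec.fst) hg
  exact this.to₂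

theorem computable_bAll {α : Type} [Primcodable α] {Q : α → ℕ → Bool} {K : α → ℕ}
    (hQ : Computable₂ Q) (hK : Computable K) : Computable fun a => bAll (Q a) (K a) := by
  have hh' : Computable fun x : α × (ℕ × Bool) => cond x.2.2 (Q x.1 x.2.1) false :=
    Computable.cond (Computable.snd.comp Computable.snd)
      (hQ.comp Computable.fst (Computable.fst.comp Computable.snd)) (Computable.const false)
  have hh : Computable₂ fun (a : α) (p : ℕ × Bool) => (p.2 && Q a p.1) := by
    have h2 := hh'.of_eq (g := fun x : α × (ℕ × Bool) => x.2.2 && Q x.1 x.2.1)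
      (fun x => by cases hx : x.2.2 <;> simp [hx])
    exact h2.to₂
  exact (Computable.nat_rec hK (Computable.const true) hh).of_eq fun a => rfl

variable {T : List Bool → Bool} (hT : Computable T)
include hT

theorem computable_noExt : Computable₂ (noExt T) := by
  have happ : Primrec fun x : (List Bool × ℕ) × ℕ => x.1.1 ++ toBits x.1.2 x.2 :=
    Primrec.list_append.comp (Primrec.fst.comp Primrec.fst)
      (primrec_toBits.comp (Primrec.snd.comp Primrec.fst) Primrec.snd)
  have hQ : Computable₂ fun (p : List Bool × ℕ) (w : ℕ) => ! T (p.1 ++ toBits p.2 w) :=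
    (Primrec.not.to_comp.comp (hT.comp happ.to_comp)).to₂
  have hK : Computable fun p : List Bool × ℕ => 2 ^ p.2 :=
    (primrec_pow.comp (Primrec.const 2) Primrec.snd).to_comp
  exact (computable_bAll hQ hK).to₂

theorem computable_EE : Computable₂ (EE T) := by
  have hg : Primrec fun x : (ℕ × ℕ) × ℕ => toBits x.1.1.unpair.1 x.2 :=
    primrec_toBits.comp
      (Primrec.fst.comp (Primrec.unpair.comp (Primrec.fst.comp Primrec.fst))) Primrec.snd
  have hQ : Computable₂ fun (a : ℕ × ℕ) (u : ℕ) => noExt T (toBits a.1.unpair.1 u) a.2 :=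
    ((computable_noExt hT).comp hg.to_comp
      (Primrec.snd.comp Primrec.fst).to_comp).to₂
  have hK : Computable fun a : ℕ × ℕ => a.1.unpair.2 + 1 :=
    (Primrec.succ.comp (Primrec.snd.comp (Primrec.unpair.comp Primrec.fst))).to_comp
  exact (computable_bAll hQ hK).to₂

theorem CE_Wset (hdc : ∀ σ τ : List Bool, σ <+: τ → T τ = true → T σ = true)
    (hroot : alive T []) : CEset (Wset T) := by
  refine ⟨fun m => Nat.rfind fun N => Part.some (EE T m N), ?_, ?_⟩
  · exact Partrec.rfind (computable_EE hT).partrec₂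
  · intro m
    rw [mem_W_iff hdc hroot]
    change _ ↔ ∃ n, true ∈ Part.some (EE T m n) ∧ ∀ {k : ℕ}, k < n → (Part.some (EE T m k)).Dom
    constructor
    · rintro ⟨N, hN⟩
      exact ⟨N, Part.mem_some_iff.mpr hN.symm, fun {k} _ => trivial⟩
    · rintro ⟨N, hN, _⟩
      exact ⟨N, (Part.mem_some_iff.mp hN).symm⟩

end Computability

section RecIn
variable {O : ℕ → ℕ}

theorem _root_.RecursiveInNat.of_eq {f g : ℕ →. ℕ} (h : RecursiveInNat O f) (e : ∀ n, f n = g n) :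
    RecursiveInNat O g := (funext e : f = g) ▸ h

theorem recIn_of_partrec {f : ℕ →. ℕ} (h : Nat.Partrec f) : RecursiveInNat O f := by
  induction h with
  | zero => exact .zero
  | succ => exact .succ
  | left => exact .left
  | right => exact .right
  | pair _ _ ihf ihg => exact .pair ihf ihg
  | comp _ _ ihf ihg => exact .comp ihf ihg
  | prec _ _ ihf ihg => exact .prec ihf ihg
  | rfind _ ihf => exact .rfind ihf

theorem recIn_tot {F : ℕ → ℕ} (h : Computable F) : RecursiveInNat O fun n => Part.some (F n) := by
  have h' : Nat.Partrec fun n => Part.some (F n) := by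
    have := Partrec.nat_iff.mp h
    exact this.of_eq fun n => rfl
  exact recIn_of_partrec h'

theorem recIn_oracle_comp {u : ℕ → ℕ} (hu : RecursiveInNat O fun n => Part.some (u n)) :
    RecursiveInNat O fun n => Part.some (O (u n)) :=
  (RecursiveInNat.comp .oracle hu).of_eq fun n => by
    exact (Part.bind_some (u n) (fun k => Part.some (O k)) :)

theorem recIn_graph {u : ℕ → ℕ} {G : ℕ → ℕ} (hu : RecursiveInNat O fun n => Part.some (u n))
    (hG : Computable G) : RecursiveInNat O fun n => Part.some (G (Nat.pair n (u n))) := by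
  have hid : RecursiveInNat O fun n => Part.some n := recIn_tot Computable.id
  have hp := RecursiveInNat.pair hid hu
  have := RecursiveInNat.comp (recIn_tot hG) hp
  exact this.of_eq fun n => by simp [Seq.seq, Part.bind_some]

theorem recIn_query {G H : ℕ → ℕ} (hG : Computable G) (hH : Computable H) :
    RecursiveInNat O fun m => Part.some (G (Nat.pair m (O (H m)))) :=
  recIn_graph (recIn_oracle_comp (recIn_tot hH)) hG

theorem recIn_rec {g : ℕ → ℕ → ℕ}
    (hg : RecursiveInNat O fun m => Part.some (g m.unpair.1 m.unpair.2)) :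
    RecursiveInNat O fun n => Part.some (Nat.rec 0 (fun y ih => g y ih) n : ℕ) := by
  have h1 : Computable fun m : ℕ => Nat.pair m.unpair.2.unpair.1 m.unpair.2.unpair.2 :=
    (Primrec₂.natPair.comp
      (Primrec.fst.comp (Primrec.unpair.comp (Primrec.snd.comp Primrec.unpair)))
      (Primrec.snd.comp (Primrec.unpair.comp (Primrec.snd.comp Primrec.unpair)))).to_comp
  have hg' : RecursiveInNat O fun m =>
      Part.some (g m.unpair.2.unpair.1 m.unpair.2.unpair.2) :=
    (RecursiveInNat.comp hg (recIn_tot h1)).of_eq fun n => by simp [Part.bind_some]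
  have hpre := RecursiveInNat.prec RecursiveInNat.zero hg'
  have hpair0 : RecursiveInNat O fun n => Part.some (Nat.pair 0 n) :=
    recIn_tot ((Primrec₂.natPair.comp (Primrec.const 0) Primrec.id).to_comp)
  have := RecursiveInNat.comp hpre hpair0
  refine this.of_eq fun n => ?_
  simp only [Part.bind_eq_bind, Part.bind_some, Nat.unpaired, Nat.unpair_pair]
  induction n with
  | zero => rfl
  | succ n ihn =>
    show ((Nat.rec _ _ n : Part ℕ) >>= _) = _
    rw [ihn]
    simp only [Part.bind_eq_bind, Part.bind_some, Nat.unpair_pair]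

end RecIn

section Reductions
variable {T : List Bool → Bool}
  (hdc : ∀ σ τ : List Bool, σ <+: τ → T τ = true → T σ = true)
  (hroot : alive T [])

-- small primrec toolkit
private lemma pr_unpair1 : Primrec fun m : ℕ => m.unpair.1 :=
  Primrec.fst.comp Primrec.unpair
private lemma pr_unpair2 : Primrec fun m : ℕ => m.unpair.2 :=
  Primrec.snd.comp Primrec.unpair
private lemma pr_G : Primrec fun k : ℕ => 2 * k.unpair.1.unpair.2 + k.unpair.2 :=
  Primrec.nat_add.comp
    (Primrec.nat_mul.comp (Primrec.const 2) (pr_unpair2.comp pr_unpair1)) pr_unpair2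

include hdc hroot

lemma W_query (n : ℕ) :
    setOracle (Wset T) (Nat.pair (n + 1) (2 * val (pfx T n))) = (lmA T n).toNat := by
  have hval : val (pfx T (n + 1)) = 2 * val (pfx T n) + (lmA T n).toNat := by
    rw [pfx_succ, val_concat]
  have hmem : (Nat.pair (n + 1) (2 * val (pfx T n)) ∈ Wset T) ↔ lmA T n = true := by
    simp only [Wset, Set.mem_setOf_eq, Nat.unpair_pair, hval]
    cases lmA T n <;> simp
  by_cases h : Nat.pair (n + 1) (2 * val (pfx T n)) ∈ Wset T
  · rw [setOracle, if_pos h]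
    rw [hmem] at h
    rw [h]; rfl
  · rw [setOracle, if_neg h]
    have : lmA T n = false := by
      cases hb : lmA T n
      · rfl
      · exact absurd (hmem.mpr hb) h
    rw [this]; rfl

lemma vrec_eq_W :
    ∀ n, (Nat.rec 0 (fun y ih => 2 * ih + setOracle (Wset T) (Nat.pair (y + 1) (2 * ih))) n : ℕ)
      = val (pfx T n) := by
  intro n
  induction n with
  | zero => simp [val]
  | succ n ih =>
    show 2 * _ + setOracle (Wset T) _ = _
    rw [ih, W_query hdc hroot, pfx_succ, val_concat]

/-- the leftmost path is computable from the c.e. set -/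
lemma red_A_le_W :
    RecursiveInNat (setOracle (Wset T)) fun n => Part.some ((lmA T n).toNat) := by
  set O := setOracle (Wset T) with hO
  have hg : RecursiveInNat O fun m =>
      Part.some (2 * m.unpair.2 + O (Nat.pair (m.unpair.1 + 1) (2 * m.unpair.2))) := by
    have hH : Computable fun m : ℕ => Nat.pair (m.unpair.1 + 1) (2 * m.unpair.2) :=
      (Primrec₂.natPair.comp (Primrec.succ.comp pr_unpair1)
        (Primrec.nat_mul.comp (Primrec.const 2) pr_unpair2)).to_comp
    have := recIn_query (O := O)
      (G := fun k => 2 * k.unpair.1.unpair.2 + k.unpair.2)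
      (H := fun m => Nat.pair (m.unpair.1 + 1) (2 * m.unpair.2)) pr_G.to_comp hH
    exact this.of_eq fun m => by simp only [Nat.unpair_pair]
  have hv : RecursiveInNat O fun n =>
      Part.some (Nat.rec 0 (fun y ih => 2 * ih + O (Nat.pair (y + 1) (2 * ih))) n : ℕ) :=
    recIn_rec (g := fun y ih => 2 * ih + O (Nat.pair (y + 1) (2 * ih))) hg
  have hG2 : Computable fun k : ℕ => Nat.pair (k.unpair.1 + 1) (2 * k.unpair.2) :=
    (Primrec₂.natPair.comp (Primrec.succ.comp pr_unpair1)
      (Primrec.nat_mul.comp (Primrec.const 2) pr_unpair2)).to_comp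
  have hfin := recIn_oracle_comp (recIn_graph hv hG2)
  refine hfin.of_eq fun n => ?_
  rw [hO]
  simp only [Nat.unpair_pair, vrec_eq_W hdc hroot]
  rw [W_query hdc hroot]

lemma vrec_eq_A :
    ∀ n, (Nat.rec 0 (fun y ih => 2 * ih + boolOracle (lmA T) y) n : ℕ) = val (pfx T n) := by
  intro n
  induction n with
  | zero => simp [val]
  | succ n ih =>
    show 2 * _ + boolOracle (lmA T) n = _
    rw [ih, pfx_succ, val_concat, boolOracle]

/-- the c.e. set is computable from the leftmost path -/
lemma red_W_le_A :
    RecursiveInNat (boolOracle (lmA T)) fun m => Part.some (setOracle (Wset T) m) := by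
  set O := boolOracle (lmA T) with hO
  have hg : RecursiveInNat O fun m => Part.some (2 * m.unpair.2 + O m.unpair.1) := by
    have := recIn_query (O := O)
      (G := fun k => 2 * k.unpair.1.unpair.2 + k.unpair.2)
      (H := fun m => m.unpair.1) pr_G.to_comp pr_unpair1.to_comp
    exact this.of_eq fun m => by simp only [Nat.unpair_pair]
  have hv : RecursiveInNat O fun n =>
      Part.some (Nat.rec 0 (fun y ih => 2 * ih + O y) n : ℕ) :=
    recIn_rec (g := fun y ih => 2 * ih + O y) hg
  have hvu : RecursiveInNat O fun m =>
      Part.some (Nat.rec 0 (fun y ih => 2 * ih + O y) m.unpair.1 : ℕ) := by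
    have := RecursiveInNat.comp hv (recIn_tot pr_unpair1.to_comp)
    exact this.of_eq fun m => by rw [Part.bind_eq_bind, Part.bind_some]
  have hK : Computable fun k : ℕ => if k.unpair.1.unpair.2 < k.unpair.2 then 1 else 0 :=
    (Primrec.ite (Primrec.nat_lt.comp (pr_unpair2.comp pr_unpair1) pr_unpair2)
      (Primrec.const 1) (Primrec.const 0)).to_comp
  have hfin := recIn_graph hvu hK
  refine hfin.of_eq fun m => ?_
  rw [hO]
  simp only [Nat.unpair_pair, vrec_eq_A hdc hroot]
  congr 1
  by_cases h : m ∈ Wset T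
  · have h' : m.unpair.2 < val (pfx T m.unpair.1) := h
    rw [if_pos h', setOracle, if_pos h]
  · have h' : ¬ m.unpair.2 < val (pfx T m.unpair.1) := h
    rw [if_neg h', setOracle, if_neg h]

end Reductions

section Leftmost
variable {T : List Bool → Bool}
  (hdc : ∀ σ τ : List Bool, σ <+: τ → T τ = true → T σ = true)

lemma lexle_antisymm {X Y : ℕ → Bool} (h1 : LexLE X Y) (h2 : LexLE Y X) : X = Y := by
  rcases h1 with rfl | ⟨n, hn, hXn, hYn⟩
  · rfl
  rcases h2 with e | ⟨m, hm, hYm, hXm⟩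
  · exact e.symm
  exfalso
  rcases lt_trichotomy n m with h | rfl | h
  · have := hm n h
    rw [hXn, hYn] at this
    simp at this
  · rw [hXn] at hXm
    simp at hXm
  · have := hn m h
    rw [hXm, hYm] at this
    simp at this

include hdc

lemma lm_leftmost (B : ℕ → Bool) (hBmem : ∀ n, T ((List.range n).map B) = true) :
    LexLE (lmA T) B := by
  by_cases hEq : lmA T = B
  · exact Or.inl hEq
  right
  have hex : ∃ n, lmA T n ≠ B n := Function.ne_iff.mp hEq
  classical
  refine ⟨Nat.find hex, fun m hm => not_not.mp (Nat.find_min hex hm), ?_, ?_⟩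
  all_goals {
    have hne : lmA T (Nat.find hex) ≠ B (Nat.find hex) := Nat.find_spec hex
    set n := Nat.find hex with hn
    have hmin : ∀ m < n, lmA T m = B m := fun m hm => not_not.mp (Nat.find_min hex hm)
    have hpfx : pfx T n = (List.range n).map B := by
      rw [← map_range_lmA]
      exact List.map_congr_left fun x hx => hmin x (List.mem_range.mp hx)
    have haliveB : ∀ k, alive T ((List.range k).map B) := by
      intro k N
      refine ⟨(List.range (k + N)).map B, hBmem _, by simp, ?_⟩
      have h1 : (List.range k).map B = ((List.range (k + N)).map B).take k := by
        rw [← List.map_take, List.take_range, min_eq_left (Nat.le_add_right k N)]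
      rw [h1]
      exact List.take_prefix _ _
    have hBn1 : alive T (pfx T n ++ [B n]) := by
      have := haliveB (n + 1)
      rwa [List.range_succ, List.map_append, ← hpfx] at this
    have hBn : B n = true := by
      by_contra hbc
      have hbf : B n = false := by simpa using hbc
      rw [hbf] at hBn1
      have hAn : lmA T n = false := by unfold lmA; rw [if_pos hBn1]
      exact hne (hAn.trans hbf.symm)
    first
    | exact hBn
    | { cases hAn : lmA T n
        · rfl
        · exact absurd (hAn.trans hBn.symm) hne }
  }

end Leftmost

end Pi01Aux

/-- Every nonempty `Π⁰₁` class contains a member of c.e. degree; in particular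
the leftmost path of such a class is of c.e. degree. -/
theorem Pi01_class_has_member_of_ce_degree (P : Set (ℕ → Bool))
    (hP : IsPi01Class P) (hne : P.Nonempty) :
    (∃ A ∈ P, OfCEDegree A) ∧
      ∀ A ∈ P, (∀ B ∈ P, LexLE A B) → OfCEDegree A := by
  obtain ⟨T, hTc, hdc, hchar⟩ := hP
  obtain ⟨B0, hB0⟩ := hne
  have hroot : Pi01Aux.alive T [] := fun N =>
    ⟨(List.range N).map B0, (hchar B0).mp hB0 N, by simp, List.nil_prefix⟩
  have hmem : Pi01Aux.lmA T ∈ P := (hchar _).mpr fun n => by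
    rw [Pi01Aux.map_range_lmA]
    exact Pi01Aux.alive_T hdc (Pi01Aux.alive_pfx hdc hroot n)
  have hdeg : OfCEDegree (Pi01Aux.lmA T) :=
    ⟨Pi01Aux.Wset T, Pi01Aux.CE_Wset hTc hdc hroot, Pi01Aux.red_A_le_W hdc hroot,
      Pi01Aux.red_W_le_A hdc hroot⟩
  have hleft : ∀ B ∈ P, LexLE (Pi01Aux.lmA T) B := fun B hB =>
    Pi01Aux.lm_leftmost hdc B fun n => (hchar B).mp hB n
  refine ⟨⟨_, hmem, hdeg⟩, ?_⟩
  intro A hA hAleft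
  have hEq : A = Pi01Aux.lmA T :=
    Pi01Aux.lexle_antisymm (hAleft _ hmem) (hleft A hA)
  rw [hEq]
  exact hdeg
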